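/- Let f : M → N be a submersion between smooth manifolds, y ∈ N, and F = f⁻¹(y). If F is compact and there exists an open neighborhood V₀ of y such that f⁻¹(v) is connected for every v ∈ V₀, then f is proper at y. -/

import Mathlib

open Filter Topology Set

theorem aux_submersion_map_nhds
    {E H E' H' : Type*}
    [NormedAddCommGroup E] [NormedSpace ℝ E] [FiniteDimensional ℝ E] [TopologicalSpace H]
    [NormedAddCommGroup E'] [NormedSpace ℝ E'] [FiniteDimensional ℝ E'] [TopologicalSpace H']
    (I : ModelWithCorners ℝ E H) (J : ModelWithCorners ℝ E' H')
    [I.Boundaryless] [J.Boundaryless]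
    {M N : Type*}
    [TopologicalSpace M] [ChartedSpace H M] [IsManifold I (⊤ : ℕ∞) M]
    [TopologicalSpace N] [ChartedSpace H' N] [IsManifold J (⊤ : ℕ∞) N]
    {f : M → N} {x₀ : M} (hf : ContMDiffAt I J (⊤ : ℕ∞) f x₀)
    (hsub : Function.Surjective (mfderiv I J f x₀)) :
    map f (𝓝 x₀) = 𝓝 (f x₀) := by
  set φ := extChartAt I x₀ with hφdef
  set ψ := extChartAt J (f x₀) with hψdef
  set a := φ x₀ with hadef
  set g : E → E' := ψ ∘ f ∘ φ.symm with hg_def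
  have hcont : ContinuousAt f x₀ := hf.continuousAt
  have hgc : ContDiffAt ℝ ((⊤ : ℕ∞) : WithTop ℕ∞) g a := by
    have := (contMDiffAt_iff.mp hf).2
    rwa [I.range_eq_univ, contDiffWithinAt_univ] at this
  have hmd : MDifferentiableAt I J f x₀ := hf.mdifferentiableAt (by simp)
  have hd : mfderiv I J f x₀ = fderiv ℝ g a := by
    simp only [mfderiv, if_pos hmd, I.range_eq_univ, fderivWithin_univ]
    exact if_pos hmd
  have hstrict : HasStrictFDerivAt g (fderiv ℝ g a) a := hgc.hasStrictFDerivAt (by simp)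
  have hrange : LinearMap.range (fderiv ℝ g a : E →ₗ[ℝ] E') = ⊤ := by
    rw [LinearMap.range_eq_top]
    rw [← hd]
    exact hsub
  have hmap_g : map g (𝓝 a) = 𝓝 (g a) := hstrict.map_nhds_eq_of_surj hrange
  have hga : g a = ψ (f x₀) := by
    simp only [hg_def, Function.comp_apply, hadef]
    rw [φ.left_inv (mem_extChartAt_source x₀)]
  have h1 : map (ψ ∘ f) (𝓝 x₀) = 𝓝 (ψ (f x₀)) := by
    have hφm : map φ (𝓝 x₀) = 𝓝 a := map_extChartAt_nhds_of_boundaryless x₀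
    have hgl : map (g ∘ φ) (𝓝 x₀) = 𝓝 (g a) := by rw [← map_map, hφm, hmap_g]
    rw [← hga, ← hgl]
    apply Filter.map_congr
    filter_upwards [extChartAt_source_mem_nhds (I := I) x₀] with z hz
    simp only [hg_def, Function.comp_apply]
    rw [φ.left_inv hz]
  have h2 : map f (𝓝 x₀) = map ψ.symm (map (ψ ∘ f) (𝓝 x₀)) := by
    rw [map_map]
    apply Filter.map_congr
    filter_upwards [hcont.preimage_mem_nhds (extChartAt_source_mem_nhds (I := J) (f x₀))]
      with z hz
    simp only [Function.comp_apply]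
    rw [ψ.left_inv hz]
  rw [h2, h1]
  have h3 := map_extChartAt_symm_nhdsWithin_range (I := J) (f x₀)
  rwa [J.range_eq_univ, nhdsWithin_univ] at h3

/-- Let `f : M → N` be a smooth submersion between finite-dimensional boundaryless
second countable Hausdorff manifolds, `y ∈ N`. If the fiber `f⁻¹(y)` is compact and the
nearby fibers are connected, then `f` is proper at `y`: every sequence `(xₙ)` with
`f(xₙ) → y` admits a convergent subsequence. -/
theorem submersion_properAt_of_compact_fiber_connected_nearby_fibers
    {E H E' H' : Type*}
    [NormedAddCommGroup E] [NormedSpace ℝ E] [FiniteDimensional ℝ E] [TopologicalSpace H]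
    [NormedAddCommGroup E'] [NormedSpace ℝ E'] [FiniteDimensional ℝ E'] [TopologicalSpace H']
    (I : ModelWithCorners ℝ E H) (J : ModelWithCorners ℝ E' H')
    [I.Boundaryless] [J.Boundaryless]
    {M N : Type*}
    [TopologicalSpace M] [ChartedSpace H M] [IsManifold I (⊤ : ℕ∞) M]
    [T2Space M] [SecondCountableTopology M]
    [TopologicalSpace N] [ChartedSpace H' N] [IsManifold J (⊤ : ℕ∞) N]
    [T2Space N] [SecondCountableTopology N]
    (f : M → N) (hf : ContMDiff I J (⊤ : ℕ∞) f)
    (hsub : ∀ x : M, Function.Surjective (mfderiv I J f x))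
    (y : N)
    (hF : IsCompact (f ⁻¹' {y}))
    (hconn : ∃ V₀ : Set N, IsOpen V₀ ∧ y ∈ V₀ ∧ ∀ v ∈ V₀, IsConnected (f ⁻¹' {v})) :
    ∀ x : ℕ → M, Tendsto (f ∘ x) atTop (𝓝 y) →
      ∃ (a : M) (φ : ℕ → ℕ), StrictMono φ ∧ Tendsto (x ∘ φ) atTop (𝓝 a) := by
  intro x hx
  obtain ⟨V₀, hV₀open, hyV₀, hconnV⟩ := hconn
  obtain ⟨x₀, hx₀⟩ : (f ⁻¹' {y}).Nonempty := (hconnV y hyV₀).nonempty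
  have hfx₀ : f x₀ = y := hx₀
  haveI : LocallyCompactSpace H := I.locallyCompactSpace
  haveI : LocallyCompactSpace M := ChartedSpace.locallyCompactSpace H M
  obtain ⟨K, hKcomp, hFK⟩ := exists_compact_superset hF
  set U := interior K with hUdef
  have hUopen : IsOpen U := isOpen_interior
  have hUK : U ⊆ K := interior_subset
  have hKclosed : IsClosed K := hKcomp.isClosed
  set C := K \ U with hCdef
  have hCcomp : IsCompact C := hKcomp.diff hUopen
  have hfCclosed : IsClosed (f '' C) := (hCcomp.image hf.continuous).isClosed
  have hyfC : y ∉ f '' C := by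
    rintro ⟨c, hc, hcy⟩
    exact hc.2 (hFK hcy)
  -- `f '' U` is a neighborhood of `y`, by the local openness of submersions
  have hmap := aux_submersion_map_nhds I J (hf.contMDiffAt) (hsub x₀)
  have hfU : f '' U ∈ 𝓝 y := by
    rw [← hfx₀, ← hmap]
    exact image_mem_map (hUopen.mem_nhds (hFK hx₀))
  set V := (f '' U) ∩ ((f '' C)ᶜ ∩ V₀) with hVdef
  have hV : V ∈ 𝓝 y :=
    inter_mem hfU (inter_mem (hfCclosed.isOpen_compl.mem_nhds hyfC) (hV₀open.mem_nhds hyV₀))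
  -- nearby fibers are entirely contained in `K`
  have hsubK : ∀ v ∈ V, f ⁻¹' {v} ⊆ K := by
    intro v hv
    set S := f ⁻¹' {v} with hSdef
    have hSU : (S ∩ U).Nonempty := by
      obtain ⟨u, hu, huv⟩ := hv.1
      exact ⟨u, huv, hu⟩
    intro s hs
    by_contra hsK
    have hSKc : (S ∩ Kᶜ).Nonempty := ⟨s, hs, hsK⟩
    have hcover : S ⊆ U ∪ Kᶜ := by
      intro z hz
      by_cases hzK : z ∈ K
      · left
        by_contra hzU
        exact hv.2.1 ⟨z, ⟨hzK, hzU⟩, hz⟩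
      · right; exact hzK
    obtain ⟨w, hwS, hwU, hwK⟩ :=
      (hconnV v hv.2.2).isPreconnected U Kᶜ hUopen hKclosed.isOpen_compl hcover hSU hSKc
    exact hwK (hUK hwU)
  -- conclude: the sequence is eventually in the compact set `K`
  have hev : ∀ᶠ n in atTop, x n ∈ K := by
    filter_upwards [hx.eventually_mem hV] with n hn
    exact hsubK _ hn rfl
  obtain ⟨a, -, φ, hφ, hlim⟩ := hKcomp.tendsto_subseq' hev.frequently
  exact ⟨a, φ, hφ, hlim⟩
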